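/- Let n ≥ 1 and let A_1, ..., A_n ⊆ ω each have infinite complement. Consider the equivalence relation on the set Inj(n × ω, ω) of injections from n disjoint copies of ω into ω, generated by φ ∼ φ ∘ (f_1 ⊔ ... ⊔ f_n) for all f_i ∈ M fixing A_i pointwise. Then two injections φ, ψ ∈ Inj(n × ω, ω) are equivalent if and only if they agree on {i} × A_i for all i = 1, ..., n. -/
import Mathlib


/-- The monoid of injective self-maps of ω (modelled as ℕ), under composition. -/
def M : Submonoid (Function.End ℕ) where
  carrier := {f | Function.Injective f}
  mul_mem' := fun hf hg => hf.comp hg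
  one_mem' := fun _ _ h => h

/-- `x` is supported on `A` if it is fixed by every injection fixing `A` pointwise. -/
def Supported {X : Type*} [MulAction M X] (A : Set ℕ) (x : X) : Prop :=
  ∀ u : M, (∀ a ∈ A, u.1 a = a) → u • x = x

namespace Stmt16Aux


noncomputable def glist (T : ℕ → Set ℕ) (hT : ∀ k, (T k).Infinite) : ℕ → List ℕ
  | 0 => []
  | (k+1) => glist T hT k ++
      [(((hT k).diff (List.finite_toSet (glist T hT k))).nonempty).choose]

noncomputable def greedy (T : ℕ → Set ℕ) (hT : ∀ k, (T k).Infinite) (k : ℕ) : ℕ :=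
  (((hT k).diff (List.finite_toSet (glist T hT k))).nonempty).choose

lemma glist_succ (T : ℕ → Set ℕ) (hT : ∀ k, (T k).Infinite) (k : ℕ) :
    glist T hT (k+1) = glist T hT k ++ [greedy T hT k] := rfl

lemma greedy_spec (T : ℕ → Set ℕ) (hT : ∀ k, (T k).Infinite) (k : ℕ) :
    greedy T hT k ∈ T k \ {x | x ∈ glist T hT k} :=
  (((hT k).diff (List.finite_toSet (glist T hT k))).nonempty).choose_spec

lemma greedy_mem (T : ℕ → Set ℕ) (hT : ∀ k, (T k).Infinite) (k : ℕ) :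
    greedy T hT k ∈ T k := (greedy_spec T hT k).1

lemma mem_glist (T : ℕ → Set ℕ) (hT : ∀ k, (T k).Infinite) :
    ∀ k j, j < k → greedy T hT j ∈ glist T hT k := by
  intro k
  induction k with
  | zero => omega
  | succ k ih =>
    intro j hj
    rw [glist_succ, List.mem_append]
    rcases Nat.lt_or_ge j k with h | h
    · exact Or.inl (ih j h)
    · have hjk : j = k := by omega
      subst hjk
      exact Or.inr (List.mem_singleton_self _)

lemma greedy_ne (T : ℕ → Set ℕ) (hT : ∀ k, (T k).Infinite) {j k : ℕ} (hlt : j < k) :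
    greedy T hT j ≠ greedy T hT k := fun h =>
  (greedy_spec T hT k).2 (by rw [Set.mem_setOf_eq, ← h]; exact mem_glist T hT k j hlt)

lemma greedy_injective (T : ℕ → Set ℕ) (hT : ∀ k, (T k).Infinite) :
    Function.Injective (greedy T hT) := by
  intro j k h
  rcases Nat.lt_trichotomy j k with hl | he | hl
  · exact absurd h (greedy_ne T hT hl)
  · exact he
  · exact absurd h.symm (greedy_ne T hT hl)

open Classical in
noncomputable def mkf (Ai : Set ℕ) (E : ℕ ≃ ↥(Aiᶜ)) (t : ℕ → ℕ) : ℕ → ℕ :=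
  fun x => if h : x ∈ Ai then x else t (E.symm ⟨x, h⟩)

lemma mkf_fix (Ai : Set ℕ) (E : ℕ ≃ ↥(Aiᶜ)) (t : ℕ → ℕ) {a : ℕ} (ha : a ∈ Ai) :
    mkf Ai E t a = a := dif_pos ha

lemma mkf_not_mem (Ai : Set ℕ) (E : ℕ ≃ ↥(Aiᶜ)) (t : ℕ → ℕ) {x : ℕ} (hx : ¬ x ∈ Ai) :
    mkf Ai E t x = t (E.symm ⟨x, hx⟩) := dif_neg hx

lemma mkf_apply_E (Ai : Set ℕ) (E : ℕ ≃ ↥(Aiᶜ)) (t : ℕ → ℕ) (m : ℕ) :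
    mkf Ai E t ((E m : ℕ)) = t m := by
  have hx : ¬ (E m : ℕ) ∈ Ai := (E m).2
  rw [mkf_not_mem Ai E t hx]
  congr 1
  rw [show (⟨(E m : ℕ), hx⟩ : ↥(Aiᶜ)) = E m from Subtype.ext rfl, Equiv.symm_apply_apply]

lemma mkf_injective (Ai : Set ℕ) (E : ℕ ≃ ↥(Aiᶜ)) (t : ℕ → ℕ)
    (htinj : Function.Injective t) (ht : ∀ m, t m ∈ Aiᶜ) :
    Function.Injective (mkf Ai E t) := by
  intro x y h
  by_cases hx : x ∈ Ai <;> by_cases hy : y ∈ Ai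
  · rwa [mkf_fix Ai E t hx, mkf_fix Ai E t hy] at h
  · rw [mkf_fix Ai E t hx, mkf_not_mem Ai E t hy] at h
    exact absurd hx (h ▸ ht _)
  · rw [mkf_not_mem Ai E t hx, mkf_fix Ai E t hy] at h
    exact absurd hy (h ▸ ht _)
  · rw [mkf_not_mem Ai E t hx, mkf_not_mem Ai E t hy] at h
    have := E.symm.injective (htinj h)
    exact congrArg Subtype.val this


end Stmt16Aux

open Stmt16Aux in
theorem stmt_16 (n : ℕ) (hn : 1 ≤ n) (A : Fin n → Set ℕ)
    (hA : ∀ i, ((A i)ᶜ : Set ℕ).Infinite)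
    (φ ψ : {φ : Fin n × ℕ → ℕ // Function.Injective φ}) :
    Relation.EqvGen
      (fun φ ψ : {φ : Fin n × ℕ → ℕ // Function.Injective φ} =>
        ∃ f : Fin n → M, (∀ i, ∀ a ∈ A i, (f i).1 a = a) ∧
          ψ.1 = fun p => φ.1 (p.1, (f p.1).1 p.2)) φ ψ ↔
    ∀ i : Fin n, ∀ a ∈ A i, φ.1 (i, a) = ψ.1 (i, a) := by
  classical
  constructor
  · intro hEq i a ha
    induction hEq with
    | rel x y hxy =>
      obtain ⟨f, hfix, hy⟩ := hxy
      rw [hy]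
      show x.1 (i, a) = x.1 (i, (f i).1 a)
      rw [hfix i a ha]
    | refl x => rfl
    | symm x y _ ih => exact ih.symm
    | trans x y z _ _ ih1 ih2 => exact ih1.trans ih2
  · intro hagree
    haveI : Nonempty (Fin n) := ⟨⟨0, hn⟩⟩
    -- enumerations of the complements
    have E : ∀ i, ℕ ≃ ↥((A i)ᶜ) := fun i =>
      haveI := (hA i).to_subtype
      (nonempty_equiv_of_countable).some
    have hEc : ∀ i m, ((E i m : ℕ)) ∈ (A i)ᶜ := fun i m => (E i m).2
    -- injectivity of m ↦ θ (i, E i m)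
    have hcomp_inj : ∀ (θ : {f : Fin n × ℕ → ℕ // Function.Injective f}) (i : Fin n),
        Function.Injective (fun m => θ.1 (i, (E i m : ℕ))) := by
      intro θ i m m' h
      have h2 := θ.2 h
      rw [Prod.mk.injEq] at h2
      exact (E i).injective (Subtype.coe_injective h2.2)
    -- injectivity of compositions
    have hcompX : ∀ (θ : {f : Fin n × ℕ → ℕ // Function.Injective f}) (g : Fin n → ℕ → ℕ),
        (∀ i, Function.Injective (g i)) →
        Function.Injective (fun p : Fin n × ℕ => θ.1 (p.1, g p.1 p.2)) := by
      rintro θ g hg ⟨i, x⟩ ⟨j, y⟩ h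
      have h2 := θ.2 h
      rw [Prod.mk.injEq] at h2
      obtain ⟨h3, h4⟩ := h2
      subst h3
      exact Prod.ext rfl (hg i h4)
    -- the greedy choice of fresh values
    have d : ℕ ≃ (Fin n × Bool × ℕ) := nonempty_equiv_of_countable.some
    obtain ⟨T', hT'def⟩ : ∃ T' : Fin n × Bool × ℕ → Set ℕ, T' = fun u =>
        Set.range (fun m' => (cond u.2.1 ψ.1 φ.1) (u.1, ((E u.1) m' : ℕ))) := ⟨_, rfl⟩
    obtain ⟨T, hTdef⟩ : ∃ T : ℕ → Set ℕ, T = fun k => T' (d k) := ⟨_, rfl⟩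
    have hT' : ∀ u, (T' u).Infinite := by
      intro u
      obtain ⟨i, b, m⟩ := u
      rw [hT'def]
      cases b
      · exact Set.infinite_range_of_injective (hcomp_inj φ i)
      · exact Set.infinite_range_of_injective (hcomp_inj ψ i)
    have hT : ∀ k, (T k).Infinite := by
      intro k
      rw [hTdef]
      exact hT' (d k)
    set c := greedy T hT with hc
    have hfull : Function.Injective (fun u : Fin n × Bool × ℕ => c (d.symm u)) :=
      (greedy_injective T hT).comp d.symm.injective
    set v : Fin n → ℕ → ℕ := fun i m => c (d.symm (i, false, m)) with hvdef
    set w : Fin n → ℕ → ℕ := fun i m => c (d.symm (i, true, m)) with hwdef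
    have hvw_ne : ∀ i j m m', v i m ≠ w j m' := by
      intro i j m m' h
      have := hfull h
      simp [Prod.ext_iff] at this
    have hvinj : ∀ i j m m', v i m = v j m' → i = j ∧ m = m' := by
      intro i j m m' h
      have := hfull h
      simp only [Prod.mk.injEq] at this
      exact ⟨this.1, this.2.2⟩
    have hwinj : ∀ i j m m', w i m = w j m' → i = j ∧ m = m' := by
      intro i j m m' h
      have := hfull h
      simp only [Prod.mk.injEq] at this
      exact ⟨this.1, this.2.2⟩
    -- v i m is a φ-value on the complement, w i m a ψ-value
    have hv : ∀ i m, ∃ m', φ.1 (i, (E i m' : ℕ)) = v i m := by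
      intro i m
      have h0 := greedy_mem T hT (d.symm (i, false, m))
      have h2 : T (d.symm (i, false, m)) = Set.range (fun m' => φ.1 (i, (E i m' : ℕ))) := by
        rw [hTdef]
        show T' (d (d.symm (i, false, m))) = _
        rw [Equiv.apply_symm_apply, hT'def]
        rfl
      rw [h2] at h0
      exact h0
    have hw : ∀ i m, ∃ m', ψ.1 (i, (E i m' : ℕ)) = w i m := by
      intro i m
      have h0 := greedy_mem T hT (d.symm (i, true, m))
      have h2 : T (d.symm (i, true, m)) = Set.range (fun m' => ψ.1 (i, (E i m' : ℕ))) := by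
        rw [hTdef]
        show T' (d (d.symm (i, true, m))) = _
        rw [Equiv.apply_symm_apply, hT'def]
        rfl
      rw [h2] at h0
      exact h0
    choose tφ htφ using hv
    choose sψ hsψ using hw
    -- step maps for φ and ψ
    set t : Fin n → ℕ → ℕ := fun i m => (E i (tφ i m) : ℕ) with htdef
    set s : Fin n → ℕ → ℕ := fun i m => (E i (sψ i m) : ℕ) with hsdef
    have htinj : ∀ i, Function.Injective (t i) := by
      intro i m m' h
      have h1 : tφ i m = tφ i m' := (E i).injective (Subtype.coe_injective h)
      have h2 : v i m = v i m' := by rw [← htφ i m, ← htφ i m', h1]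
      exact (hvinj i i m m' h2).2
    have hsinj : ∀ i, Function.Injective (s i) := by
      intro i m m' h
      have h1 : sψ i m = sψ i m' := (E i).injective (Subtype.coe_injective h)
      have h2 : w i m = w i m' := by rw [← hsψ i m, ← hsψ i m', h1]
      exact (hwinj i i m m' h2).2
    set F : Fin n → ℕ → ℕ := fun i => mkf (A i) (E i) (t i) with hFdef
    set G : Fin n → ℕ → ℕ := fun i => mkf (A i) (E i) (s i) with hGdef
    have hFinj : ∀ i, Function.Injective (F i) := fun i =>
      mkf_injective _ _ _ (htinj i) (fun m => hEc i (tφ i m))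
    have hGinj : ∀ i, Function.Injective (G i) := fun i =>
      mkf_injective _ _ _ (hsinj i) (fun m => hEc i (sψ i m))
    set φ' : {f : Fin n × ℕ → ℕ // Function.Injective f} :=
      ⟨fun p => φ.1 (p.1, F p.1 p.2), hcompX φ F hFinj⟩ with hφ'def
    set ψ' : {f : Fin n × ℕ → ℕ // Function.Injective f} :=
      ⟨fun p => ψ.1 (p.1, G p.1 p.2), hcompX ψ G hGinj⟩ with hψ'def
    have hφ'A : ∀ i a, a ∈ A i → φ'.1 (i, a) = φ.1 (i, a) := by
      intro i a ha
      show φ.1 (i, mkf (A i) (E i) (t i) a) = φ.1 (i, a)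
      rw [mkf_fix _ _ _ ha]
    have hψ'A : ∀ i a, a ∈ A i → ψ'.1 (i, a) = ψ.1 (i, a) := by
      intro i a ha
      show ψ.1 (i, mkf (A i) (E i) (s i) a) = ψ.1 (i, a)
      rw [mkf_fix _ _ _ ha]
    have hφ'B : ∀ i x (hx : ¬ x ∈ A i), φ'.1 (i, x) = v i ((E i).symm ⟨x, hx⟩) := by
      intro i x hx
      show φ.1 (i, mkf (A i) (E i) (t i) x) = _
      rw [mkf_not_mem _ _ _ hx]
      exact htφ i _
    have hψ'B : ∀ i x (hx : ¬ x ∈ A i), ψ'.1 (i, x) = w i ((E i).symm ⟨x, hx⟩) := by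
      intro i x hx
      show ψ.1 (i, mkf (A i) (E i) (s i) x) = _
      rw [mkf_not_mem _ _ _ hx]
      exact hsψ i _
    -- the middle injection χ
    obtain ⟨χf, hχfdef⟩ : ∃ χf : Fin n × ℕ → ℕ, χf = fun p =>
        if h : p.2 ∈ A p.1 then φ.1 p
        else (fun k => if Even k then v p.1 (k / 2) else w p.1 (k / 2))
          ((E p.1).symm ⟨p.2, h⟩) := ⟨_, rfl⟩
    have hχA : ∀ i a (_ : a ∈ A i), χf (i, a) = φ.1 (i, a) := by
      intro i a ha
      rw [hχfdef]
      exact dif_pos ha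
    have hχB : ∀ i x (hx : ¬ x ∈ A i), χf (i, x) =
        (if Even ((E i).symm ⟨x, hx⟩ : ℕ) then v i (((E i).symm ⟨x, hx⟩) / 2)
         else w i (((E i).symm ⟨x, hx⟩) / 2)) := by
      intro i x hx
      rw [hχfdef]
      exact dif_neg hx
    -- the possible values of χf on the complement part
    have hχB_val : ∀ i x (hx : ¬ x ∈ A i),
        (∃ m, χf (i, x) = v i m) ∨ (∃ m, χf (i, x) = w i m) := by
      intro i x hx
      rw [hχB i x hx]
      by_cases h : Even ((E i).symm ⟨x, hx⟩ : ℕ)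
      · exact Or.inl ⟨_, if_pos h⟩
      · exact Or.inr ⟨_, if_neg h⟩
    -- v and w values are φ/ψ values at complement points
    have hv_ne_A : ∀ i j a m, a ∈ A j → v i m ≠ φ.1 (j, a) := by
      intro i j a m ha h
      rw [← htφ i m] at h
      have h2 := φ.2 h
      rw [Prod.mk.injEq] at h2
      have h3 := hEc i (tφ i m)
      rw [h2.2, h2.1] at h3
      exact h3 ha
    have hw_ne_A : ∀ i j a m, a ∈ A j → w i m ≠ φ.1 (j, a) := by
      intro i j a m ha h
      rw [← hsψ i m, hagree j a ha] at h
      have h2 := ψ.2 h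
      rw [Prod.mk.injEq] at h2
      have h3 := hEc i (sψ i m)
      rw [h2.2, h2.1] at h3
      exact h3 ha
    have hχinj : Function.Injective χf := by
      rintro ⟨i, x⟩ ⟨j, y⟩ hxy
      by_cases hx : x ∈ A i <;> by_cases hy : y ∈ A j
      · rw [hχA i x hx, hχA j y hy] at hxy
        exact φ.2 hxy
      · rw [hχA i x hx] at hxy
        rcases hχB_val j y hy with ⟨m, hm⟩ | ⟨m, hm⟩
        · exact absurd (hm ▸ hxy).symm (hv_ne_A j i x m hx)
        · exact absurd (hm ▸ hxy).symm (hw_ne_A j i x m hx)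
      · rw [hχA j y hy] at hxy
        rcases hχB_val i x hx with ⟨m, hm⟩ | ⟨m, hm⟩
        · exact absurd (hm ▸ hxy) (hv_ne_A i j y m hy)
        · exact absurd (hm ▸ hxy) (hw_ne_A i j y m hy)
      · rw [hχB i x hx, hχB j y hy] at hxy
        set k := ((E i).symm ⟨x, hx⟩ : ℕ) with hk
        set k' := ((E j).symm ⟨y, hy⟩ : ℕ) with hk'
        have hfin : i = j ∧ k = k' → (⟨i, x⟩ : Fin n × ℕ) = ⟨j, y⟩ := by
          rintro ⟨h1, h2⟩
          subst h1
          have h3 : (⟨x, hx⟩ : ↥((A i)ᶜ)) = ⟨y, hy⟩ := (E i).symm.injective h2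
          exact Prod.ext rfl (congrArg Subtype.val h3)
        by_cases he : Even k <;> by_cases he' : Even k'
        · rw [if_pos he, if_pos he'] at hxy
          obtain ⟨h1, h2⟩ := hvinj _ _ _ _ hxy
          refine hfin ⟨h1, ?_⟩
          rw [Nat.even_iff] at he he'
          omega
        · rw [if_pos he, if_neg he'] at hxy
          exact absurd hxy (hvw_ne _ _ _ _)
        · rw [if_neg he, if_pos he'] at hxy
          exact absurd hxy.symm (hvw_ne _ _ _ _)
        · rw [if_neg he, if_neg he'] at hxy
          obtain ⟨h1, h2⟩ := hwinj _ _ _ _ hxy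
          refine hfin ⟨h1, ?_⟩
          rw [Nat.even_iff] at he he'
          omega
    set χ : {f : Fin n × ℕ → ℕ // Function.Injective f} := ⟨χf, hχinj⟩ with hχdef
    -- the doubling maps
    set F' : Fin n → ℕ → ℕ := fun i => mkf (A i) (E i) (fun m => (E i (2 * m) : ℕ)) with hF'def
    set G' : Fin n → ℕ → ℕ := fun i => mkf (A i) (E i) (fun m => (E i (2 * m + 1) : ℕ)) with hG'def
    have hF'inj : ∀ i, Function.Injective (F' i) := fun i =>
      mkf_injective _ _ _
        (fun m m' h => by
          have := (E i).injective (Subtype.coe_injective h); omega)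
        (fun m => hEc i _)
    have hG'inj : ∀ i, Function.Injective (G' i) := fun i =>
      mkf_injective _ _ _
        (fun m m' h => by
          have := (E i).injective (Subtype.coe_injective h); omega)
        (fun m => hEc i _)
    -- χ composed with F' gives φ', with G' gives ψ'
    have hstep2 : φ'.1 = fun p => χ.1 (p.1, F' p.1 p.2) := by
      funext p
      obtain ⟨i, x⟩ := p
      show φ'.1 (i, x) = χf (i, mkf (A i) (E i) (fun m => (E i (2 * m) : ℕ)) x)
      by_cases hx : x ∈ A i
      · rw [hφ'A i x hx]
        rw [mkf_fix _ _ _ hx, hχA i x hx]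
      · rw [hφ'B i x hx, mkf_not_mem _ _ _ hx]
        set k := ((E i).symm ⟨x, hx⟩ : ℕ) with hk
        have hmem : ¬ (E i (2 * k) : ℕ) ∈ A i := hEc i (2 * k)
        rw [hχB i _ hmem]
        have hsm : ((E i).symm ⟨(E i (2 * k) : ℕ), hmem⟩ : ℕ) = 2 * k := by
          rw [show (⟨(E i (2 * k) : ℕ), hmem⟩ : ↥((A i)ᶜ)) = E i (2 * k) from Subtype.ext rfl,
            Equiv.symm_apply_apply]
        rw [hsm, if_pos ⟨k, by omega⟩]
        congr 1
        omega
    have hstep3 : ψ'.1 = fun p => χ.1 (p.1, G' p.1 p.2) := by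
      funext p
      obtain ⟨i, x⟩ := p
      show ψ'.1 (i, x) = χf (i, mkf (A i) (E i) (fun m => (E i (2 * m + 1) : ℕ)) x)
      by_cases hx : x ∈ A i
      · rw [hψ'A i x hx]
        rw [mkf_fix _ _ _ hx, hχA i x hx, hagree i x hx]
      · rw [hψ'B i x hx, mkf_not_mem _ _ _ hx]
        set k := ((E i).symm ⟨x, hx⟩ : ℕ) with hk
        have hmem : ¬ (E i (2 * k + 1) : ℕ) ∈ A i := hEc i (2 * k + 1)
        rw [hχB i _ hmem]
        have hsm : ((E i).symm ⟨(E i (2 * k + 1) : ℕ), hmem⟩ : ℕ) = 2 * k + 1 := by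
          rw [show (⟨(E i (2 * k + 1) : ℕ), hmem⟩ : ↥((A i)ᶜ)) = E i (2 * k + 1) from
            Subtype.ext rfl, Equiv.symm_apply_apply]
        rw [hsm, if_neg (by rw [Nat.even_iff]; omega)]
        congr 1
        omega
    -- assemble the zigzag
    have e1 : ∃ f : Fin n → M, (∀ i, ∀ a ∈ A i, (f i).1 a = a) ∧
        φ'.1 = fun p => φ.1 (p.1, (f p.1).1 p.2) :=
      ⟨fun i => ⟨F i, hFinj i⟩, fun i a ha => show F i a = a from mkf_fix (A i) (E i) (t i) ha, rfl⟩
    have e2 : ∃ f : Fin n → M, (∀ i, ∀ a ∈ A i, (f i).1 a = a) ∧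
        φ'.1 = fun p => χ.1 (p.1, (f p.1).1 p.2) :=
      ⟨fun i => ⟨F' i, hF'inj i⟩, fun i a ha =>
        show F' i a = a from mkf_fix (A i) (E i) (fun m => (E i (2 * m) : ℕ)) ha, hstep2⟩
    have e3 : ∃ f : Fin n → M, (∀ i, ∀ a ∈ A i, (f i).1 a = a) ∧
        ψ'.1 = fun p => χ.1 (p.1, (f p.1).1 p.2) :=
      ⟨fun i => ⟨G' i, hG'inj i⟩, fun i a ha =>
        show G' i a = a from mkf_fix (A i) (E i) (fun m => (E i (2 * m + 1) : ℕ)) ha, hstep3⟩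
    have e4 : ∃ f : Fin n → M, (∀ i, ∀ a ∈ A i, (f i).1 a = a) ∧
        ψ'.1 = fun p => ψ.1 (p.1, (f p.1).1 p.2) :=
      ⟨fun i => ⟨G i, hGinj i⟩, fun i a ha => show G i a = a from mkf_fix (A i) (E i) (s i) ha, rfl⟩
    exact Relation.EqvGen.trans _ _ _
      (Relation.EqvGen.trans _ _ _ (Relation.EqvGen.rel _ _ e1)
        (Relation.EqvGen.symm _ _ (Relation.EqvGen.rel _ _ e2)))
      (Relation.EqvGen.trans _ _ _ (Relation.EqvGen.rel _ _ e3)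
        (Relation.EqvGen.symm _ _ (Relation.EqvGen.rel _ _ e4)))
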